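/- A sequence (x_n) of real numbers converges statistically to x if and only if there exists a set M ⊆ ℕ of natural density 1 such that the subsequence (x_n)_{n ∈ M} converges to x in the usual sense. -/

import Mathlib

open Filter
open scoped Classical

/-- `A ⊆ ℕ` has natural density zero. -/
noncomputable def HasDensityZero (A : Set ℕ) : Prop :=
  Tendsto (fun n : ℕ => (((Finset.range n).filter (fun m => m + 1 ∈ A)).card : ℝ) / n)
    atTop (nhds 0)

/-- If `A ⊆ B` beyond some point `N` and `B` has density zero, so does `A`. -/
lemma hasDensityZero_of_subset_beyond {A B : Set ℕ} (hB : HasDensityZero B) (N : ℕ)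
    (h : ∀ m, N ≤ m → m ∈ A → m ∈ B) : HasDensityZero A := by
  have hcard : ∀ n : ℕ, ((Finset.range n).filter (fun m => m + 1 ∈ A)).card ≤
      ((Finset.range n).filter (fun m => m + 1 ∈ B)).card + N := by
    intro n
    have hsub : (Finset.range n).filter (fun m => m + 1 ∈ A) ⊆
        ((Finset.range n).filter (fun m => m + 1 ∈ B)) ∪ Finset.range N := by
      intro m hm
      simp only [Finset.mem_filter, Finset.mem_range, Finset.mem_union] at hm ⊢
      by_cases hNm : N ≤ m + 1
      · exact Or.inl ⟨hm.1, h _ hNm hm.2⟩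
      · exact Or.inr (by omega)
    calc ((Finset.range n).filter (fun m => m + 1 ∈ A)).card
        ≤ (((Finset.range n).filter (fun m => m + 1 ∈ B)) ∪ Finset.range N).card :=
          Finset.card_le_card hsub
      _ ≤ ((Finset.range n).filter (fun m => m + 1 ∈ B)).card + (Finset.range N).card :=
          Finset.card_union_le _ _
      _ = ((Finset.range n).filter (fun m => m + 1 ∈ B)).card + N := by
          rw [Finset.card_range]
  rw [HasDensityZero] at hB ⊢
  apply squeeze_zero (g := fun n : ℕ =>
    (((Finset.range n).filter (fun m => m + 1 ∈ B)).card : ℝ) / n + (N : ℝ) / n)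
  · intro n; positivity
  · intro n
    rcases Nat.eq_zero_or_pos n with rfl | hn
    · simp
    · rw [← add_div]
      have hn' : (0 : ℝ) < n := by exact_mod_cast hn
      exact div_le_div_of_nonneg_right (by exact_mod_cast hcard n) hn'.le
  · have := hB.add (tendsto_const_div_atTop_nhds_zero_nat (N : ℝ))
    simpa using this

/-- A real sequence `(x n)` converges statistically to `x` iff there is a set
`M ⊆ ℕ` of natural density `1` such that the subsequence indexed by `M`
converges to `x` in the usual sense. -/
theorem statConv_iff_conv_along_density_one (x : ℕ → ℝ) (x₀ : ℝ) :
    (∀ ε : ℝ, 0 < ε → HasDensityZero {n : ℕ | ε ≤ |x n - x₀|}) ↔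
    ∃ M : Set ℕ, HasDensityZero Mᶜ ∧
      Tendsto x (atTop ⊓ Filter.principal M) (nhds x₀) := by
  constructor
  · intro h
    set A : ℕ → Set ℕ := fun k => {n : ℕ | 1 / ((k : ℝ) + 1) ≤ |x n - x₀|} with hAdef
    have hAmono : ∀ i j : ℕ, i ≤ j → A i ⊆ A j := by
      intro i j hij n hn
      simp only [hAdef, Set.mem_setOf_eq] at hn ⊢
      refine le_trans ?_ hn
      apply one_div_le_one_div_of_le
      · positivity
      · have : (i : ℝ) ≤ j := by exact_mod_cast hij
        linarith
    have hN : ∀ k : ℕ, ∃ Nk : ℕ, ∀ n ≥ Nk,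
        (((Finset.range n).filter (fun m => m + 1 ∈ A k)).card : ℝ) / n < 1 / ((k : ℝ) + 1) := by
      intro k
      have hpos : (0 : ℝ) < 1 / ((k : ℝ) + 1) := by positivity
      have ht := h (1 / ((k : ℝ) + 1)) hpos
      rw [HasDensityZero] at ht
      exact eventually_atTop.mp (ht.eventually (gt_mem_nhds hpos))
    choose N hN' using hN
    set ν : ℕ → ℕ := fun k => k + (Finset.range (k + 1)).sup N with hνdef
    have hν_strict : StrictMono ν := by
      apply strictMono_nat_of_lt_succ
      intro k
      have : (Finset.range (k + 1)).sup N ≤ (Finset.range (k + 1 + 1)).sup N :=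
        Finset.sup_mono (Finset.range_subset_range.mpr (by omega))
      simp only [hνdef]; omega
    have hνN : ∀ k, N k ≤ ν k := by
      intro k
      have : N k ≤ (Finset.range (k + 1)).sup N :=
        Finset.le_sup (Finset.mem_range.mpr (by omega))
      simp only [hνdef]; omega
    have hν_self : ∀ k, k ≤ ν k := fun k => Nat.le_add_right _ _
    have key : ∀ k n : ℕ, ν k ≤ n → ∃ j, k ≤ j ∧ ν j ≤ n ∧ n < ν (j + 1) := by
      intro k n hkn
      have hkn' : k ≤ n := le_trans (hν_self k) hkn
      refine ⟨Nat.findGreatest (fun j => ν j ≤ n) n,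
        Nat.le_findGreatest (P := fun j => ν j ≤ n) hkn' hkn,
        Nat.findGreatest_spec (P := fun j => ν j ≤ n) hkn' hkn, ?_⟩
      by_contra hcon
      push_neg at hcon
      have hj1n : Nat.findGreatest (fun j => ν j ≤ n) n + 1 ≤ n :=
        le_trans (hν_self _) hcon
      have := Nat.le_findGreatest (P := fun j => ν j ≤ n) hj1n hcon
      omega
    set B : Set ℕ := {m : ℕ | ∃ i, ν i ≤ m ∧ m < ν (i + 1) ∧ m ∈ A i} with hBdef
    have hblock : ∀ n j : ℕ, n < ν (j + 1) → ∀ m, m ≤ n → m ∈ B → m ∈ A j := by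
      intro n j hn m hmn hmB
      obtain ⟨i, hi1, hi2, hi3⟩ := hmB
      have : ν i < ν (j + 1) := lt_of_le_of_lt hi1 (lt_of_le_of_lt hmn hn)
      have hij : i ≤ j := by
        have := hν_strict.lt_iff_lt.mp this
        omega
      exact hAmono i j hij hi3
    refine ⟨Bᶜ, ?_, ?_⟩
    · rw [compl_compl]
      rw [HasDensityZero, Metric.tendsto_atTop]
      intro ε hε
      obtain ⟨k, hk⟩ := exists_nat_one_div_lt hε
      refine ⟨ν k + 1, fun n hn => ?_⟩
      obtain ⟨j, hkj, hj1, hj2⟩ := key k n (by omega)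
      have hnpos : (0 : ℝ) < n := by
        have : 1 ≤ n := by omega
        exact_mod_cast this
      have hsub : ((Finset.range n).filter (fun m => m + 1 ∈ B)).card ≤
          ((Finset.range n).filter (fun m => m + 1 ∈ A j)).card := by
        apply Finset.card_le_card
        intro m hm
        simp only [Finset.mem_filter, Finset.mem_range] at hm ⊢
        exact ⟨hm.1, hblock n j hj2 (m + 1) (by omega) hm.2⟩
      have h1 : (((Finset.range n).filter (fun m => m + 1 ∈ B)).card : ℝ) / n ≤
          (((Finset.range n).filter (fun m => m + 1 ∈ A j)).card : ℝ) / n := by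
        exact div_le_div_of_nonneg_right (by exact_mod_cast hsub) hnpos.le
      have h2 : (((Finset.range n).filter (fun m => m + 1 ∈ A j)).card : ℝ) / n <
          1 / ((j : ℝ) + 1) := hN' j n (le_trans (hνN j) hj1)
      have h3 : 1 / ((j : ℝ) + 1) ≤ 1 / ((k : ℝ) + 1) := by
        apply one_div_le_one_div_of_le
        · positivity
        · have : (k : ℝ) ≤ j := by exact_mod_cast hkj
          linarith
      rw [Real.dist_eq, sub_zero, abs_of_nonneg (by positivity)]
      linarith
    · rw [Metric.tendsto_nhds]
      intro ε hε
      rw [eventually_inf_principal]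
      obtain ⟨k, hk⟩ := exists_nat_one_div_lt hε
      filter_upwards [eventually_ge_atTop (ν k)] with n hn hnM
      obtain ⟨j, hkj, hj1, hj2⟩ := key k n hn
      have hnA : n ∉ A j := fun hAj => hnM ⟨j, hj1, hj2, hAj⟩
      have hlt : |x n - x₀| < 1 / ((j : ℝ) + 1) := by
        by_contra hcon
        push_neg at hcon
        exact hnA hcon
      have h3 : 1 / ((j : ℝ) + 1) ≤ 1 / ((k : ℝ) + 1) := by
        apply one_div_le_one_div_of_le
        · positivity
        · have : (k : ℝ) ≤ j := by exact_mod_cast hkj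
          linarith
      rw [Real.dist_eq]
      linarith
  · rintro ⟨M, hM, hconv⟩ ε hε
    have hev := (Metric.tendsto_nhds.mp hconv) ε hε
    rw [eventually_inf_principal] at hev
    obtain ⟨Nε, hNε⟩ := eventually_atTop.mp hev
    apply hasDensityZero_of_subset_beyond hM Nε
    intro m hm hmA
    intro hmM
    have := hNε m hm hmM
    rw [Real.dist_eq] at this
    exact absurd hmA (not_le.mpr this)
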